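/- Let G be a group with cyclic derived subgroup G' (so G is cyclic-by-abelian), and for each g ∈ G fix an integer s_g with a^g = a^{s_g} for all a ∈ G'. Then for all g, h ∈ G and n ≥ 0, one has (gh)^n = g^n h^n [h,g]^{S_{s_g,s_h}(n)}, where S_{s,t}(n) = ∑_{0 ≤ i < j < n} s^i t^j and [h,g] = h^{-1}g^{-1}hg. -/

import Mathlib

/-- `S2 s t n = ∑_{0 ≤ i < j < n} s^i t^j`. -/
def S2 (s t : ℤ) (n : ℕ) : ℤ := ∑ j ∈ Finset.range n, ∑ i ∈ Finset.range j, s ^ i * t ^ j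

lemma S2_rec (u v : ℤ) (n : ℕ) :
    S2 u v (n + 1) = S2 u v n * (u * v) + (∑ j ∈ Finset.range n, v ^ j) * v := by
  simp only [S2, Finset.sum_range_succ', Finset.sum_range_zero, add_zero,
    Finset.sum_mul, pow_succ, pow_zero, one_mul]
  rw [Finset.sum_add_distrib]
  congr 1
  apply Finset.sum_congr rfl
  intro j _
  apply Finset.sum_congr rfl
  intro i _
  ring

theorem stmt18 (G : Type*) [Group G] (hcyc : IsCyclic (commutator G))
    (s : G → ℤ) (hs : ∀ g : G, ∀ a ∈ commutator G, g⁻¹ * a * g = a ^ (s g)) :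
    ∀ g h : G, ∀ n : ℕ,
      (g * h) ^ n = g ^ n * h ^ n * (h⁻¹ * g⁻¹ * h * g) ^ (S2 (s g) (s h) n) := by
  intro g h n
  set c : G := h⁻¹ * g⁻¹ * h * g with hc_def
  have hc : c ∈ commutator G := by
    have := Subgroup.commutator_mem_commutator (Subgroup.mem_top h⁻¹) (Subgroup.mem_top g⁻¹)
    simpa [commutator, commutatorElement_def, ← mul_assoc] using this
  -- conjugation of powers of c
  have key : ∀ (k : G) (m : ℤ), c ^ m * k = k * c ^ (m * s k) := by
    intro k m
    have h1 : k⁻¹ * c * k = c ^ (s k) := hs k c hc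
    have h2 : k⁻¹ * c ^ m * k = (k⁻¹ * c * k) ^ m := by
      have := conj_zpow (i := m) (a := k⁻¹) (b := c)
      simpa using this.symm
    have h3 : k⁻¹ * c ^ m * k = c ^ (m * s k) := by
      rw [h2, h1, ← zpow_mul, mul_comm]
    calc c ^ m * k = k * (k⁻¹ * c ^ m * k) := by group
      _ = k * c ^ (m * s k) := by rw [h3]
  have hpow : ∀ (k : G) (n : ℕ) (m : ℤ), c ^ m * k ^ n = k ^ n * c ^ (m * (s k) ^ n) := by
    intro k n
    induction n with
    | zero => intro m; simp
    | succ n ih =>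
      intro m
      calc c ^ m * k ^ (n + 1) = (c ^ m * k ^ n) * k := by rw [pow_succ, mul_assoc]
        _ = k ^ n * (c ^ (m * (s k) ^ n) * k) := by rw [ih, mul_assoc]
        _ = k ^ n * (k * c ^ (m * (s k) ^ n * s k)) := by rw [key]
        _ = k ^ (n + 1) * c ^ (m * (s k) ^ (n + 1)) := by
            have e : m * (s k) ^ n * s k = m * (s k) ^ (n + 1) := by ring
            rw [e, pow_succ k, mul_assoc]
  -- move g past powers of h
  have hhg : h * g = g * h * c := by
    simp only [hc_def]; group
  have hmove : ∀ n : ℕ, h ^ n * g = g * h ^ n * c ^ (∑ j ∈ Finset.range n, (s h) ^ j) := by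
    intro n
    induction n with
    | zero => simp
    | succ n ih =>
      calc h ^ (n + 1) * g = h * (h ^ n * g) := by rw [pow_succ']; group
        _ = h * (g * h ^ n * c ^ (∑ j ∈ Finset.range n, (s h) ^ j)) := by rw [ih]
        _ = (h * g) * (h ^ n * c ^ (∑ j ∈ Finset.range n, (s h) ^ j)) := by group
        _ = g * h * (c ^ (1 : ℤ) * h ^ n) * c ^ (∑ j ∈ Finset.range n, (s h) ^ j) := by
            rw [hhg]; group
        _ = g * h * (h ^ n * c ^ ((1 : ℤ) * (s h) ^ n)) * c ^ (∑ j ∈ Finset.range n, (s h) ^ j) := by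
            rw [hpow]
        _ = g * h ^ (n + 1) * c ^ (∑ j ∈ Finset.range (n + 1), (s h) ^ j) := by
            have e : (∑ j ∈ Finset.range (n + 1), (s h) ^ j)
                = 1 * s h ^ n + ∑ j ∈ Finset.range n, (s h) ^ j := by
              rw [Finset.sum_range_succ]; ring
            rw [e, zpow_add, pow_succ']
            group
  induction n with
  | zero => simp [S2]
  | succ n ih =>
    calc (g * h) ^ (n + 1) = ((g ^ n * h ^ n) * (c ^ (S2 (s g) (s h) n) * g)) * h := by
          rw [pow_succ, ih]; group
    _ = ((g ^ n * h ^ n) * (g * c ^ (S2 (s g) (s h) n * s g))) * h := by rw [key]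
    _ = (g ^ n * (h ^ n * g)) * (c ^ (S2 (s g) (s h) n * s g) * h) := by group
    _ = (g ^ n * (g * h ^ n * c ^ (∑ j ∈ Finset.range n, (s h) ^ j))) *
          (h * c ^ (S2 (s g) (s h) n * s g * s h)) := by rw [hmove, key]
    _ = g ^ (n + 1) * h ^ n * ((c ^ (∑ j ∈ Finset.range n, (s h) ^ j) * h) *
          c ^ (S2 (s g) (s h) n * s g * s h)) := by rw [pow_succ]; group
    _ = g ^ (n + 1) * h ^ n * ((h * c ^ ((∑ j ∈ Finset.range n, (s h) ^ j) * s h)) *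
          c ^ (S2 (s g) (s h) n * s g * s h)) := by rw [key]
    _ = g ^ (n + 1) * h ^ (n + 1) * c ^ (S2 (s g) (s h) (n + 1)) := by
          have e : S2 (s g) (s h) (n + 1)
              = (∑ j ∈ Finset.range n, (s h) ^ j) * s h + S2 (s g) (s h) n * s g * s h := by
            rw [S2_rec]; ring
          rw [e, zpow_add, pow_succ]
          group
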